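/- For every integer n ≥ 1 and every z ∈ ℂ ∖ [−1,1], ∫_{−1}^{1} P_n(t) · log|z − t| dt = (2/(2n+1)) · Re(Q_{n+1}(z) − Q_{n−1}(z)), where Q_m(z) = (1/2) ∫_{−1}^{1} P_m(s)/(z − s) ds is the Legendre function of the second kind given by Neumann's integral formula. -/

import Mathlib

open MeasureTheory Set Filter Finset Complex Topology

noncomputable section

/-- The Legendre polynomial Pₙ via Rodrigues' formula. -/
def legendreP (n : ℕ) : Polynomial ℝ :=
  ((1 : ℝ) / (2 ^ n * n.factorial)) • Polynomial.derivative^[n] ((Polynomial.X ^ 2 - 1) ^ n)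

/-- The Legendre function of the second kind via Neumann's integral formula. -/
def legendreQ (n : ℕ) (z : ℂ) : ℂ :=
  (1 / 2) * ∫ s in (-1:ℝ)..1, (((legendreP n).eval s : ℝ) : ℂ) / (z - s)

namespace LegendreAux
open Polynomial
local notation "D" => Polynomial.derivative (R := ℝ)
def u (n : ℕ) : Polynomial ℝ := (X ^ 2 - 1) ^ n

lemma Dadd (k : ℕ) (p q : Polynomial ℝ) : D^[k] (p + q) = D^[k] p + D^[k] q := by
  induction k generalizing p q with
  | zero => rfl
  | succ k ih =>
    rw [Function.iterate_succ_apply, derivative_add, ih,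
      ← Function.iterate_succ_apply, ← Function.iterate_succ_apply]

lemma du (n : ℕ) : D (u (n+1)) = C (2*(n+1) : ℝ) * (X * u n) := by
  unfold u
  rw [derivative_pow]
  simp [derivative_sq]
  ring

lemma lb (k : ℕ) (p : Polynomial ℝ) :
    D^[k+1] (X * p) = X * D^[k+1] p + C (k+1 : ℝ) * D^[k] p := by
  induction k generalizing p with
  | zero => simp [derivative_mul]; ring
  | succ k ih =>
    rw [Function.iterate_succ_apply (n := k+1), derivative_mul]
    simp only [derivative_X, one_mul]
    rw [Dadd, ih (D p), ← Function.iterate_succ_apply, ← Function.iterate_succ_apply]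
    push_cast
    simp only [map_add, map_mul, map_one, map_ofNat, map_natCast]
    ring

lemma ode0 (n : ℕ) : (X^2 - 1) * D (u n) = C (2*n : ℝ) * X * u n := by
  cases n with
  | zero => simp [u]
  | succ n =>
    rw [du]
    unfold u
    push_cast
    simp only [map_add, map_mul, map_one, map_ofNat, map_natCast]
    rw [pow_succ]
    ring

lemma odek (n k : ℕ) :
    (X^2 - 1) * D^[k+2] (u n) + C (2*(k+1) : ℝ) * X * D^[k+1] (u n)
      + C ((k+1)*k : ℝ) * D^[k] (u n)
    = C (2*n : ℝ) * X * D^[k+1] (u n) + C (2*n*(k+1) : ℝ) * D^[k] (u n) := by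
  induction k with
  | zero =>
    have h := congrArg Polynomial.derivative (ode0 n)
    simp only [derivative_mul, derivative_sub, derivative_one, derivative_C, derivative_X,
      derivative_X_pow] at h
    rw [show Polynomial.derivative (u n) = D^[1] (u n) from rfl] at h
    simp only [← Function.iterate_succ_apply'] at h
    simp only [show (0:ℕ)+2 = 1+1 by rfl, show (0:ℕ)+1 = 1 by rfl,
      Function.iterate_zero_apply] at h ⊢
    push_cast at h ⊢
    simp only [map_add, map_mul, map_one, map_ofNat, map_natCast, map_zero] at h ⊢
    linear_combination h
  | succ k ih =>
    have h := congrArg Polynomial.derivative ih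
    simp only [derivative_mul, derivative_add, derivative_sub, derivative_one, derivative_C,
      derivative_X, derivative_X_pow] at h
    simp only [← Function.iterate_succ_apply'] at h
    simp only [show k+2+1 = k+3 from rfl, show k+1+2 = k+3 from rfl, show k+1+1 = k+2 from rfl]
      at h ⊢
    push_cast at h ⊢
    simp only [map_add, map_mul, map_one, map_ofNat, map_natCast, map_zero] at h ⊢
    linear_combination h

lemma cor (j : ℕ) :
    (X^2 - 1) * D^[j+2] (u (j+1)) = C ((j+1)*(j+2) : ℝ) * D^[j] (u (j+1)) := by
  have h := odek (j+1) j
  push_cast at h ⊢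
  simp only [map_add, map_mul, map_one, map_ofNat, map_natCast, map_zero] at h ⊢
  linear_combination h

lemma key (i : ℕ) :
    D^[i+4] (u (i+3)) = C (2*(i+3)*(2*i+5) : ℝ) * D^[i+2] (u (i+2))
      + C (4*(i+2)*(i+3) : ℝ) * D^[i+2] (u (i+1)) := by
  have h1 : D^[i+4] (u (i+3))
      = C (2*(i+3) : ℝ) * (X * D^[i+3] (u (i+2)) + C (i+3 : ℝ) * D^[i+2] (u (i+2))) := by
    rw [show i+4 = (i+3)+1 from rfl, Function.iterate_succ_apply, du,
      iterate_derivative_C_mul, show i+3 = (i+2)+1 from rfl, lb]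
    push_cast
    ring
  have h2 : D^[i+3] (u (i+2))
      = C (2*(i+2) : ℝ) * (X * D^[i+2] (u (i+1)) + C (i+2 : ℝ) * D^[i+1] (u (i+1))) := by
    rw [show i+3 = (i+2)+1 from rfl, Function.iterate_succ_apply, du,
      iterate_derivative_C_mul, show i+2 = (i+1)+1 from rfl, lb]
    push_cast
    ring
  have h3 : D^[i+2] (u (i+2))
      = C (2*(i+2) : ℝ) * (X * D^[i+1] (u (i+1)) + C (i+1 : ℝ) * D^[i] (u (i+1))) := by
    rw [show i+2 = (i+1)+1 from rfl, Function.iterate_succ_apply, du,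
      iterate_derivative_C_mul, show i+1 = i+1 from rfl, lb]
    push_cast
    ring
  have h4 := cor i
  rw [h1, h2, h3]
  push_cast at h4 ⊢
  simp only [map_add, map_mul, map_one, map_ofNat, map_natCast, map_zero] at h4 ⊢
  linear_combination ((2*((i:Polynomial ℝ)+3))*(2*((i:Polynomial ℝ)+2))) * h4

lemma key1 : D^[3] (u 2) = C (12 : ℝ) * D^[1] (u 1) + C (8 : ℝ) * D^[1] (u 0) := by
  unfold u
  have h2 : ((X:Polynomial ℝ)^2 - 1)^2 = X^4 - 2*X^2 + 1 := by ring
  have e0 : D (((X:Polynomial ℝ)^2 - 1)^0) = 0 := by simp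
  have e1 : D (((X:Polynomial ℝ)^2 - 1)^1) = 2*X := by
    simp [derivative_sub, derivative_X_pow, map_ofNat]
    norm_num
  have e2 : D (((X:Polynomial ℝ)^2 - 1)^2) = 4*X^3 - 4*X := by
    rw [h2]; simp [derivative_add, derivative_sub, derivative_X_pow, derivative_mul, map_ofNat]
    ring
  have e3 : D ((4:Polynomial ℝ)*X^3 - 4*X) = 12*X^2 - 4 := by
    simp [derivative_sub, derivative_mul, derivative_X_pow, map_ofNat]; ring
  have e4 : D ((12:Polynomial ℝ)*X^2 - 4) = 24*X := by
    simp [derivative_sub, derivative_mul, derivative_X_pow, map_ofNat]; ring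
  show D (D (D (((X:Polynomial ℝ)^2 - 1)^2))) = C 12 * D (((X:Polynomial ℝ)^2-1)^1) + C 8 * D (((X:Polynomial ℝ)^2-1)^0)
  rw [e2, e3, e4, e1, e0]
  simp only [map_ofNat]
  ring

def legP (n : ℕ) : Polynomial ℝ :=
  ((1 : ℝ) / (2 ^ n * n.factorial)) • D^[n] (u n)

lemma deriv_legP (n : ℕ) : D (legP n) = ((1 : ℝ) / (2 ^ n * n.factorial)) • D^[n+1] (u n) := by
  rw [legP, derivative_smul]
  congr 1
  exact (Function.iterate_succ_apply' _ _ _).symm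

lemma pearson (m : ℕ) :
    D (legP (m+2)) = D (legP m) + C (2*(m+1)+1 : ℝ) * legP (m+1) := by
  rw [deriv_legP, deriv_legP, legP, smul_eq_C_mul, smul_eq_C_mul, smul_eq_C_mul]
  cases m with
  | zero =>
    rw [key1]
    have hA : C ((1:ℝ) / (2 ^ (0+2) * (0+2).factorial)) * C (12:ℝ)
        = C (2*((0:ℕ)+1)+1 : ℝ) * C ((1:ℝ) / (2 ^ (0+1) * (0+1).factorial)) := by
      rw [← C_mul, ← C_mul]; norm_num
    have hB : C ((1:ℝ) / (2 ^ (0+2) * (0+2).factorial)) * C (8:ℝ)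
        = C ((1:ℝ) / (2 ^ 0 * (0).factorial)) := by
      rw [← C_mul]; norm_num
    linear_combination (D^[1] (u 1)) * hA + (D^[1] (u 0)) * hB
  | succ i =>
    rw [show i+1+2 = i+3 from rfl, show i+3+1 = i+4 from rfl, key i,
      show i+1+1 = i+2 from rfl]
    have h2 : ((2:ℝ) ^ (i+2) * (i+2).factorial) ≠ 0 := by positivity
    have h3 : ((2:ℝ) ^ (i+3) * (i+3).factorial) ≠ 0 := by positivity
    have h1 : ((2:ℝ) ^ (i+1) * (i+1).factorial) ≠ 0 := by positivity
    have hA : C ((1:ℝ) / (2 ^ (i+3) * (i+3).factorial)) * C (2*(i+3)*(2*i+5) : ℝ)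
        = C (2*((i:ℕ)+1+1)+1 : ℝ) * C ((1:ℝ) / (2 ^ (i+2) * (i+2).factorial)) := by
      rw [← C_mul, ← C_mul]
      congr 1
      push_cast [Nat.factorial_succ]
      field_simp
      ring
    have hB : C ((1:ℝ) / (2 ^ (i+3) * (i+3).factorial)) * C (4*(i+2)*(i+3) : ℝ)
        = C ((1:ℝ) / (2 ^ (i+1) * (i+1).factorial)) := by
      rw [← C_mul]
      congr 1
      push_cast [Nat.factorial_succ]
      field_simp
      ring
    push_cast
    push_cast at hA hB
    linear_combination (D^[i+2] (u (i+2))) * hA + (D^[i+2] (u (i+1))) * hB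

lemma aux1 : ∀ (k m : ℕ), (X - 1)^m ∣ D^[k] (u (m + k)) := by
  intro k
  induction k with
  | zero =>
    intro m
    refine ⟨(X+1)^m, ?_⟩
    simp only [Function.iterate_zero_apply, Nat.add_zero, u, ← mul_pow]
    ring_nf
  | succ k ih =>
    intro m
    obtain ⟨r, hr⟩ := ih (m+1)
    rw [show m + (k+1) = (m+1) + k from by ring, Function.iterate_succ_apply', hr]
    refine ⟨C ((m:ℝ)+1) * r + (X - 1) * D r, ?_⟩
    rw [derivative_mul, derivative_pow]
    push_cast
    simp
    ring

lemma aux2 : ∀ (k m : ℕ), (X + 1)^m ∣ D^[k] (u (m + k)) := by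
  intro k
  induction k with
  | zero =>
    intro m
    refine ⟨(X-1)^m, ?_⟩
    simp only [Function.iterate_zero_apply, Nat.add_zero, u, ← mul_pow]
    ring_nf
  | succ k ih =>
    intro m
    obtain ⟨r, hr⟩ := ih (m+1)
    rw [show m + (k+1) = (m+1) + k from by ring, Function.iterate_succ_apply', hr]
    refine ⟨C ((m:ℝ)+1) * r + (X + 1) * D r, ?_⟩
    rw [derivative_mul, derivative_pow]
    push_cast
    simp
    ring

lemma eval_one_iter (m : ℕ) : (D^[m] (u m)).eval 1 = 2^m * m.factorial := by
  induction m with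
  | zero => simp [u]
  | succ m ih =>
    rw [Function.iterate_succ_apply, du, iterate_derivative_C_mul]
    cases m with
    | zero => simp [u]
    | succ k =>
      rw [lb]
      obtain ⟨r, hr⟩ := aux1 k 1
      rw [show (1:ℕ) + k = k + 1 from by ring] at hr
      rw [hr]
      simp only [eval_mul, eval_add, eval_C, eval_X, eval_sub, eval_one, eval_pow]
      rw [ih]
      push_cast [Nat.factorial_succ]
      ring

lemma eval_neg_one_iter (m : ℕ) :
    (D^[m] (u m)).eval (-1) = (-1)^m * (2^m * m.factorial) := by
  induction m with
  | zero => simp [u]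
  | succ m ih =>
    rw [Function.iterate_succ_apply, du, iterate_derivative_C_mul]
    cases m with
    | zero => simp [u]
    | succ k =>
      rw [lb]
      obtain ⟨r, hr⟩ := aux2 k 1
      rw [show (1:ℕ) + k = k + 1 from by ring] at hr
      rw [hr]
      simp only [eval_mul, eval_add, eval_C, eval_X, eval_sub, eval_one, eval_pow]
      rw [ih]
      push_cast [Nat.factorial_succ]
      ring


lemma legP_eval_one (m : ℕ) : (legP m).eval 1 = 1 := by
  rw [legP, eval_smul, smul_eq_mul, eval_one_iter]
  have h : ((2:ℝ)^m * m.factorial) ≠ 0 := by positivity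
  field_simp

lemma legP_eval_neg_one (m : ℕ) : (legP m).eval (-1) = (-1)^m := by
  rw [legP, eval_smul, smul_eq_mul, eval_neg_one_iter]
  have h : ((2:ℝ)^m * m.factorial) ≠ 0 := by positivity
  field_simp


lemma legP_eq (n : ℕ) : legendreP n = legP n := rfl

end LegendreAux

/-- logarithmic moments of Legendre polynomials via Legendre Q functions. -/
theorem legendre_log_moment (n : ℕ) (hn : 1 ≤ n) (z : ℂ)
    (hz : ∀ t : ℝ, t ∈ Set.Icc (-1:ℝ) 1 → z ≠ (t : ℂ)) :
    ∫ t in (-1:ℝ)..1, (legendreP n).eval t * Real.log ‖z - t‖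
      = (2 / (2 * n + 1)) * (legendreQ (n + 1) z - legendreQ (n - 1) z).re := by
  obtain ⟨m, rfl⟩ : ∃ m, n = m + 1 := ⟨n - 1, (Nat.succ_pred_eq_of_pos hn).symm⟩
  simp only [show m + 1 + 1 = m + 2 from rfl, Nat.add_sub_cancel]
  set F : Polynomial ℝ := legendreP (m+2) - legendreP m with hF
  -- nonvanishing
  have huIcc : (Set.uIcc (-1:ℝ) 1) = Set.Icc (-1:ℝ) 1 := Set.uIcc_of_le (by norm_num)
  have hzsub : ∀ t : ℝ, t ∈ (Set.uIcc (-1:ℝ) 1) → z - (t:ℂ) ≠ 0 := by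
    intro t ht
    rw [huIcc] at ht
    exact sub_ne_zero.mpr (hz t ht)
  have hzt : ∀ t : ℝ, t ∈ (Set.uIcc (-1:ℝ) 1) → Complex.normSq (z - t) ≠ 0 := by
    intro t ht
    simpa [Complex.normSq_eq_zero] using hzsub t ht
  -- derivative of the log factor
  set L : ℝ → ℝ := fun t => Real.log ‖z - t‖ with hL
  set L' : ℝ → ℝ := fun t => (t - z.re) / Complex.normSq (z - t) with hL'
  have hnormSq : ∀ s : ℝ, Complex.normSq (z - s) = (z.re - s)^2 + z.im^2 := by
    intro s; simp [Complex.normSq_apply, Complex.sub_re, Complex.sub_im]; ring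
  have hLderiv : ∀ t ∈ (Set.uIcc (-1:ℝ) 1), HasDerivAt L (L' t) t := by
    intro t ht
    have hbase : HasDerivAt (fun s : ℝ => z.re - s) (-1) t := (hasDerivAt_id t).const_sub z.re
    have h0 : HasDerivAt (fun s : ℝ => (z.re - s)^2 + z.im^2) (2*(z.re - t)^1*(-1)) t :=
      (hbase.pow 2).add_const (z.im^2)
    have h1 : HasDerivAt (fun s : ℝ => Complex.normSq (z - s)) (2*(z.re - t)^1*(-1)) t := by
      simpa only [← hnormSq] using h0
    have h2 := (h1.log (hzt t ht)).div_const 2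
    have heq : L = fun s : ℝ => Real.log (Complex.normSq (z - s)) / 2 := by
      funext s
      rw [hL]
      simp only [Complex.norm_def, Real.log_sqrt (Complex.normSq_nonneg _)]
    rw [heq]
    convert h2 using 1
    any_goals rfl
    rw [hL']
    field_simp
    ring
  -- derivative of the polynomial factor
  have hDF : Polynomial.derivative F = Polynomial.C (2*(m:ℝ)+3) * legendreP (m+1) := by
    rw [hF, Polynomial.derivative_sub, LegendreAux.legP_eq, LegendreAux.legP_eq, LegendreAux.pearson m]
    rw [LegendreAux.legP_eq]
    push_cast
    ring_nf
  have hFderiv : ∀ t ∈ (Set.uIcc (-1:ℝ) 1), HasDerivAt (fun s : ℝ => F.eval s)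
      ((2*(m:ℝ)+3) * (legendreP (m+1)).eval t) t := by
    intro t _
    have h := F.hasDerivAt t
    rw [hDF] at h
    simpa using h
  -- integrability
  have hcont_den : Continuous fun s : ℝ => Complex.normSq (z - s) :=
    Complex.continuous_normSq.comp (continuous_const.sub Complex.continuous_ofReal)
  have hL'cont : ContinuousOn L' (Set.uIcc (-1:ℝ) 1) := by
    apply ContinuousOn.div
    · exact (continuous_id.sub continuous_const).continuousOn
    · exact hcont_den.continuousOn
    · exact fun t ht => hzt t ht
  have hL'int : IntervalIntegrable L' volume (-1) 1 := hL'cont.intervalIntegrable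
  have hv'int : IntervalIntegrable (fun t => (2*(m:ℝ)+3) * (legendreP (m+1)).eval t)
      volume (-1) 1 :=
    (continuous_const.mul (legendreP (m+1)).continuous).intervalIntegrable _ _
  -- integration by parts
  have parts := intervalIntegral.integral_mul_deriv_eq_deriv_mul hLderiv hFderiv hL'int hv'int
  have hFone : F.eval 1 = 0 := by
    rw [hF, Polynomial.eval_sub, LegendreAux.legP_eq, LegendreAux.legP_eq,
      LegendreAux.legP_eval_one, LegendreAux.legP_eval_one, sub_self]
  have hFneg : F.eval (-1) = 0 := by
    rw [hF, Polynomial.eval_sub, LegendreAux.legP_eq, LegendreAux.legP_eq,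
      LegendreAux.legP_eval_neg_one, LegendreAux.legP_eval_neg_one, pow_succ, pow_succ]
    ring
  rw [hFone, hFneg] at parts
  set R : ℝ := ∫ t in (-1:ℝ)..1, (z.re - t) / Complex.normSq (z - t) * F.eval t with hR
  have hcoef : (2*(m:ℝ)+3) ≠ 0 := by positivity
  have hmain : ∫ t in (-1:ℝ)..1, (legendreP (m+1)).eval t * L t = (1/(2*(m:ℝ)+3)) * R := by
    have lhsEq : (∫ t in (-1:ℝ)..1, L t * ((2*(m:ℝ)+3) * (legendreP (m+1)).eval t))
        = (2*(m:ℝ)+3) * ∫ t in (-1:ℝ)..1, (legendreP (m+1)).eval t * L t := by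
      rw [← intervalIntegral.integral_const_mul]
      apply intervalIntegral.integral_congr
      intro t _
      ring
    have rhsEq : (∫ t in (-1:ℝ)..1, L' t * F.eval t) = -R := by
      rw [hR, ← intervalIntegral.integral_neg]
      apply intervalIntegral.integral_congr
      intro t _
      rw [hL']
      field_simp
      ring
    rw [lhsEq, rhsEq] at parts
    field_simp at parts ⊢
    linarith [parts]
  -- the Q side
  have hQint : ∀ k : ℕ, IntervalIntegrable
      (fun s : ℝ => (((legendreP k).eval s : ℝ) : ℂ) / (z - s)) volume (-1) 1 := by
    intro k
    apply ContinuousOn.intervalIntegrable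
    apply ContinuousOn.div
    · exact (Complex.continuous_ofReal.comp (legendreP k).continuous).continuousOn
    · exact (continuous_const.sub Complex.continuous_ofReal).continuousOn
    · exact hzsub
  have hFQint : IntervalIntegrable (fun s : ℝ => ((F.eval s : ℝ) : ℂ) / (z - s))
      volume (-1) 1 := by
    apply ContinuousOn.intervalIntegrable
    apply ContinuousOn.div
    · exact (Complex.continuous_ofReal.comp F.continuous).continuousOn
    · exact (continuous_const.sub Complex.continuous_ofReal).continuousOn
    · exact hzsub
  have hQsub : legendreQ (m+2) z - legendreQ m z
      = (1/2 : ℂ) * ∫ s in (-1:ℝ)..1, ((F.eval s : ℝ) : ℂ) / (z - s) := by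
    rw [legendreQ, legendreQ, ← mul_sub, ← intervalIntegral.integral_sub (hQint _) (hQint _)]
    congr 1
    apply intervalIntegral.integral_congr
    intro s _
    rw [hF]
    push_cast [Polynomial.eval_sub]
    rw [sub_div]
  have hre : (∫ s in (-1:ℝ)..1, ((F.eval s : ℝ) : ℂ) / (z - s)).re = R := by
    have h1 := Complex.reCLM.intervalIntegral_comp_comm hFQint
    simp only [Complex.reCLM_apply] at h1
    rw [← h1, hR]
    apply intervalIntegral.integral_congr
    intro s _
    simp only [Complex.div_re, Complex.sub_re, Complex.sub_im, Complex.ofReal_re,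
      Complex.ofReal_im]
    ring
  have hQre : (legendreQ (m+2) z - legendreQ m z).re = (1/2) * R := by
    rw [hQsub, show (1/2:ℂ) = ((1/2:ℝ):ℂ) by norm_num, Complex.re_ofReal_mul, hre]
  rw [hQre, hmain]
  push_cast
  field_simp
  ring

end
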